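/- Let D ⊂ ℂⁿ be a bounded, balanced, convex domain with Minkowski functional h (a norm), and let F : D → D be an automorphism of D. For any s ∈ (h(F(0)), 1), one has ((s − h(F(0)))/(1 − s·h(F(0))))·D ⊆ F⁻¹(s·D). -/

import Mathlib

open Set Pointwise Metric

/-- The Minkowski functional of a set `D`. -/
noncomputable def mink {E : Type*} [NormedAddCommGroup E] [NormedSpace ℂ E]
    (D : Set E) (z : E) : ℝ :=
  sInf {t : ℝ | 0 < t ∧ t⁻¹ • z ∈ D}


private lemma quad_aux (A a t : ℝ) (hA0 : 0 ≤ A) (hA : A < 1) (ha0 : 0 ≤ a) (ha : a < 1)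
    (ht0 : 0 ≤ t)
    (hQ : A^2*(1 - a^2*t^2) - 2*a*A*(1-t^2) + a^2 - t^2 ≤ 0) : A * (1 + a*t) ≤ a + t := by
  have key : (A*(1+a*t)-(a+t)) * (A*(1-a*t)-(a-t)) ≤ 0 := by nlinarith [hQ]
  by_contra h
  push_neg at h
  have h1 : 0 < A*(1+a*t)-(a+t) := by linarith
  have h2 : A*(1-a*t)-(a-t) ≤ 0 := by
    by_contra h2; push_neg at h2
    nlinarith
  have hAa : A * a < 1 := by nlinarith
  nlinarith

private lemma norm_sq_eq (z : ℂ) : ‖z‖^2 = Complex.normSq z := by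
  rw [Complex.sq_norm]

private lemma mob_lt {w η : ℂ} (hw : ‖w‖ < 1) (hη : ‖η‖ < 1) :
    ‖η - w‖ < ‖1 - (starRingEnd ℂ) w * η‖ := by
  have h1 : ‖η - w‖^2 < ‖1 - (starRingEnd ℂ) w * η‖^2 := by
    rw [norm_sq_eq, norm_sq_eq, Complex.normSq_sub, Complex.normSq_sub]
    have e1 : Complex.normSq η = ‖η‖^2 := (norm_sq_eq η).symm
    have e2 : Complex.normSq w = ‖w‖^2 := (norm_sq_eq w).symm
    have e3 : Complex.normSq ((starRingEnd ℂ) w * η) = ‖w‖^2 * ‖η‖^2 := by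
      rw [Complex.normSq_mul, Complex.normSq_conj, ← norm_sq_eq, ← norm_sq_eq]
    have e4 : (η * (starRingEnd ℂ) w).re = ((1:ℂ) * (starRingEnd ℂ) ((starRingEnd ℂ) w * η)).re := by
      rw [one_mul, Complex.conj_re, mul_comm]
    rw [e1, e2, e3, Complex.normSq_one, e4]
    have hw2 : ‖w‖^2 < 1 := by nlinarith [norm_nonneg w]
    have hη2 : ‖η‖^2 < 1 := by nlinarith [norm_nonneg η]
    nlinarith [mul_pos (sub_pos.2 hw2) (sub_pos.2 hη2)]
  have := norm_nonneg (1 - (starRingEnd ℂ) w * η)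
  nlinarith [norm_nonneg (η - w)]

private lemma mob_ne {w η : ℂ} (hw : ‖w‖ < 1) (hη : ‖η‖ < 1) :
    1 - (starRingEnd ℂ) w * η ≠ 0 := by
  intro h
  have h1 : (1:ℂ) = (starRingEnd ℂ) w * η := by linear_combination h
  have := congrArg norm h1
  rw [norm_mul, norm_one, RCLike.norm_conj] at this
  nlinarith [norm_nonneg w, norm_nonneg η]

/-- Schwarz–Pick inequality on the unit disc. -/
lemma schwarz_pick {g : ℂ → ℂ} (hd : DifferentiableOn ℂ g (ball 0 1))
    (hm : Set.MapsTo g (ball 0 1) (ball 0 1)) {ζ : ℂ} (hζ : ζ ∈ ball 0 1) :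
    ‖g ζ‖ * (1 + ‖g 0‖ * ‖ζ‖) ≤ ‖g 0‖ + ‖ζ‖ := by
  set w := g 0 with hwdef
  have h0mem : (0:ℂ) ∈ ball (0:ℂ) 1 := mem_ball_self one_pos
  have hw : ‖w‖ < 1 := mem_ball_zero_iff.1 (hm h0mem)
  set m : ℂ → ℂ := fun η => (η - w) / (1 - (starRingEnd ℂ) w * η) with hmdef
  have hgball : ∀ x ∈ ball (0:ℂ) 1, ‖g x‖ < 1 := fun x hx => mem_ball_zero_iff.1 (hm hx)
  have hdenom : ∀ x ∈ ball (0:ℂ) 1, 1 - (starRingEnd ℂ) w * g x ≠ 0 :=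
    fun x hx => mob_ne hw (hgball x hx)
  have hcompd : DifferentiableOn ℂ (fun x => m (g x)) (ball 0 1) := by
    apply DifferentiableOn.div
    · exact hd.sub (differentiableOn_const w)
    · exact (differentiableOn_const _).sub ((differentiableOn_const _).mul hd)
    · exact hdenom
  have hcompm : Set.MapsTo (fun x => m (g x)) (ball (0:ℂ) 1) (ball (0:ℂ) 1) := by
    intro x hx
    rw [mem_ball_zero_iff]
    have hlt := mob_lt hw (hgball x hx)
    have hpos : 0 < ‖1 - (starRingEnd ℂ) w * g x‖ := norm_pos_iff.2 (hdenom x hx)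
    simp only [hmdef, norm_div]
    rw [div_lt_one hpos]
    exact hlt
  have hcomp0 : m (g 0) = 0 := by
    simp [hmdef, ← hwdef]
  have hζ1 : ‖ζ‖ < 1 := by
    exact mem_ball_zero_iff.1 hζ
  have hschwarz := Complex.norm_le_norm_of_mapsTo_ball hcompd (hcompm.mono_right ball_subset_closedBall) hcomp0 hζ1
  -- ‖g ζ - w‖ ≤ ‖ζ‖ * ‖1 - conj w * g ζ‖
  have hS : ‖g ζ - w‖ ≤ ‖ζ‖ * ‖1 - (starRingEnd ℂ) w * g ζ‖ := by
    have hpos : 0 < ‖1 - (starRingEnd ℂ) w * g ζ‖ := norm_pos_iff.2 (hdenom ζ hζ)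
    have : ‖g ζ - w‖ / ‖1 - (starRingEnd ℂ) w * g ζ‖ ≤ ‖ζ‖ := by
      rw [← norm_div]
      simpa [hmdef] using hschwarz
    calc ‖g ζ - w‖ = ‖g ζ - w‖ / ‖1 - (starRingEnd ℂ) w * g ζ‖ * ‖1 - (starRingEnd ℂ) w * g ζ‖ :=
          (div_mul_cancel₀ _ hpos.ne').symm
      _ ≤ ‖ζ‖ * ‖1 - (starRingEnd ℂ) w * g ζ‖ := by
          exact mul_le_mul_of_nonneg_right this hpos.le
  set A := ‖g ζ‖ with hAdef
  set a := ‖w‖ with hadef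
  set t := ‖ζ‖ with htdef
  set b := ((starRingEnd ℂ) w * g ζ).re with hbdef
  have hA0 : 0 ≤ A := norm_nonneg _
  have hA1 : A < 1 := hgball ζ hζ
  have ha0 : 0 ≤ a := norm_nonneg _
  have ht0 : 0 ≤ t := norm_nonneg _
  have e1 : ‖g ζ - w‖^2 = A^2 + a^2 - 2*b := by
    rw [norm_sq_eq, Complex.normSq_sub, ← norm_sq_eq, ← norm_sq_eq]
    have : (g ζ * (starRingEnd ℂ) w).re = b := by
      rw [hbdef, mul_comm]
    rw [this]
  have e2 : ‖1 - (starRingEnd ℂ) w * g ζ‖^2 = 1 - 2*b + a^2*A^2 := by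
    rw [norm_sq_eq, Complex.normSq_sub, Complex.normSq_one, Complex.normSq_mul,
      Complex.normSq_conj, ← norm_sq_eq, ← norm_sq_eq]
    have : ((1:ℂ) * (starRingEnd ℂ) ((starRingEnd ℂ) w * g ζ)).re = b := by
      rw [one_mul, Complex.conj_re]
    rw [this]
    ring
  have hb : b ≤ a * A := by
    calc b ≤ ‖(starRingEnd ℂ) w * g ζ‖ := Complex.re_le_norm _
      _ = a * A := by rw [norm_mul, RCLike.norm_conj]
  have hS2 : A^2 + a^2 - 2*b ≤ t^2 * (1 - 2*b + a^2*A^2) := by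
    have := pow_le_pow_left₀ (norm_nonneg _) hS 2
    rw [e1, mul_pow, e2] at this
    linarith
  have ht1 : t < 1 := mem_ball_zero_iff.1 hζ
  have hprod : 0 ≤ (a*A - b)*(1-t^2) :=
    mul_nonneg (by linarith) (by nlinarith)
  have hQ : A^2*(1 - a^2*t^2) - 2*a*A*(1-t^2) + a^2 - t^2 ≤ 0 := by nlinarith [hS2, hprod]
  exact quad_aux A a t hA0 hA1 ha0 hw ht0 hQ


private lemma final_aux (s a r t A b0 : ℝ) (ha0 : 0 ≤ a) (hs1 : a < s) (hs2 : s < 1)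
    (ht0 : 0 < t) (ht1 : t < 1) (htr : t < r) (hrr : r * (1 - s * a) = s - a)
    (hb00 : 0 ≤ b0) (hg0 : b0 ≤ a) (hsle : s ≤ A) (hSP : A * (1 + b0 * t) ≤ b0 + t) : False := by
  have hs0 : 0 < s := lt_of_le_of_lt ha0 hs1
  have hst : 0 ≤ 1 - s * t := by nlinarith
  have h1 : s * (1 + b0 * t) ≤ b0 + t := by nlinarith
  have h2 : s - t ≤ a * (1 - s * t) := by nlinarith
  nlinarith


/-- Proposition 2.7: for a bounded balanced convex domain `D ⊂ ℂⁿ` with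
Minkowski functional `h`, and `F` an automorphism of `D`, for any `s ∈ (h(F(0)), 1)` one
has `((s − h(F 0))/(1 − s·h(F 0))) • D ⊆ F⁻¹(s • D)`. -/
theorem balanced_domain_automorphism_contraction (n : ℕ)
    (D : Set (EuclideanSpace ℂ (Fin n)))
    (hopen : IsOpen D) (hconn : IsConnected D) (hbdd : Bornology.IsBounded D)
    (hconv : Convex ℝ D) (h0 : (0 : EuclideanSpace ℂ (Fin n)) ∈ D)
    (hbal : ∀ z ∈ D, ∀ l : ℂ, ‖l‖ ≤ 1 → l • z ∈ D)
    (F G : EuclideanSpace ℂ (Fin n) → EuclideanSpace ℂ (Fin n))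
    (hF : DifferentiableOn ℂ F D) (hFmaps : Set.MapsTo F D D)
    (hG : DifferentiableOn ℂ G D) (hGmaps : Set.MapsTo G D D)
    (hGF : ∀ z ∈ D, G (F z) = z) (hFG : ∀ w ∈ D, F (G w) = w)
    (s : ℝ) (hs1 : mink D (F 0) < s) (hs2 : s < 1) :
    ((s - mink D (F 0)) / (1 - s * mink D (F 0))) • D ⊆ D ∩ F ⁻¹' (s • D) := by
  set a := mink D (F 0) with ha_def
  have hF0 : F 0 ∈ D := hFmaps h0
  have hSne : {t : ℝ | 0 < t ∧ t⁻¹ • F 0 ∈ D}.Nonempty := ⟨1, one_pos, by simpa using hF0⟩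
  have ha0 : 0 ≤ a := le_csInf hSne (fun t ht => ht.1.le)
  have hs0 : 0 < s := lt_of_le_of_lt ha0 hs1
  have hsa : s * a < 1 := by nlinarith
  set r := (s - a) / (1 - s * a) with hr_def
  have hr0 : 0 < r := div_pos (by linarith) (by linarith)
  have hr1 : r < 1 := by
    rw [hr_def, div_lt_one (by linarith)]; nlinarith
  intro z hz
  obtain ⟨w, hw, rfl⟩ := hz
  have coe_smul : ∀ (x : ℝ) (v : EuclideanSpace ℂ (Fin n)), ((x : ℂ)) • v = x • v := by
    intro x v
    rw [← Complex.coe_algebraMap, algebraMap_smul]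
  have hzD : r • w ∈ D := by
    have := hbal w hw (r : ℂ) (by
      rw [Complex.norm_real, Real.norm_eq_abs, abs_of_pos hr0]; exact hr1.le)
    rwa [coe_smul] at this
  refine ⟨hzD, ?_⟩
  simp only [Set.mem_preimage]
  by_contra hcon
  have hsD_open : IsOpen (s • D) := hopen.smul₀ hs0.ne'
  have hsD_conv : Convex ℝ (s • D) := hconv.smul s
  obtain ⟨f, hf⟩ := geometric_hahn_banach_open_point hsD_conv hsD_open hcon
  set c := f (F (r • w)) with hc_def
  have hc0 : 0 < c := by
    have := hf 0 ⟨0, h0, smul_zero s⟩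
    simpa using this
  set L : EuclideanSpace ℂ (Fin n) →L[ℂ] ℂ := ContinuousLinearMap.extendTo𝕜' f with hL_def
  have hLre : ∀ x : EuclideanSpace ℂ (Fin n), (L x).re = f x := by
    intro x
    show (StrongDual.extendRCLike (𝕜 := ℂ) f x).re = f x
    rw [StrongDual.extendRCLike_apply]
    simp
  have hLbound : ∀ y ∈ D, ‖L y‖ < c / s := by
    intro y hy
    by_cases hLy : L y = 0
    · rw [hLy, norm_zero]; positivity
    · set θ : ℂ := (‖L y‖ : ℂ) / (L y) with hθ_def
      have hθ1 : ‖θ‖ = 1 := by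
        rw [hθ_def, norm_div, Complex.norm_real, Real.norm_eq_abs,
          abs_of_pos (norm_pos_iff.2 hLy)]
        exact div_self (norm_pos_iff.2 hLy).ne'
      have hθy : θ • y ∈ D := hbal y hy θ hθ1.le
      have hLθ : L (θ • y) = (‖L y‖ : ℂ) := by
        rw [map_smul, smul_eq_mul, hθ_def, div_mul_cancel₀ _ hLy]
      have hfθ : f (θ • y) = ‖L y‖ := by
        have := hLre (θ • y)
        rw [hLθ] at this
        simpa using this.symm
      have hmem : s • (θ • y) ∈ s • D := smul_mem_smul_set hθy
      have := hf _ hmem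
      rw [map_smul, smul_eq_mul, hfθ] at this
      rw [lt_div_iff₀ hs0, mul_comm]
      exact this
  have hLF0 : s / c * ‖L (F 0)‖ ≤ a := by
    apply le_csInf hSne
    rintro t ⟨ht0, htD⟩
    have h1 : F 0 = t • (t⁻¹ • F 0) := (smul_inv_smul₀ ht0.ne' _).symm
    have h2 : ‖L (F 0)‖ = t * ‖L (t⁻¹ • F 0)‖ := by
      conv_lhs => rw [h1, ← coe_smul, map_smul]
      rw [smul_eq_mul, norm_mul, Complex.norm_real, Real.norm_eq_abs, abs_of_pos ht0]
    have h3 : ‖L (t⁻¹ • F 0)‖ < c / s := hLbound _ htD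
    rw [h2]
    rw [div_mul_eq_mul_div, div_le_iff₀ hc0]
    calc s * (t * ‖L (t⁻¹ • F 0)‖) ≤ s * (t * (c / s)) := by
          apply mul_le_mul_of_nonneg_left _ hs0.le
          exact mul_le_mul_of_nonneg_left h3.le ht0.le
      _ = t * c := by field_simp
  -- choose τ > 1 with τ • w ∈ D
  have hcont : Continuous fun τ : ℝ => τ • w := continuous_id.smul continuous_const
  have h1w : (fun τ : ℝ => τ • w) 1 ∈ D := by simpa using hw
  have hev : ∀ᶠ τ : ℝ in nhds 1, τ • w ∈ D :=
    hcont.continuousAt (hopen.mem_nhds h1w)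
  obtain ⟨τ, hτ1, hτD⟩ := hev.exists_gt
  have hτ0 : 0 < τ := lt_trans one_pos hτ1
  set t := r / τ with ht_def
  have ht0 : 0 < t := div_pos hr0 hτ0
  have htr : t < r := by
    rw [ht_def, div_lt_iff₀ hτ0]; nlinarith
  have ht1 : t < 1 := lt_trans htr hr1
  set w' : EuclideanSpace ℂ (Fin n) := τ • w with hw'_def
  set g : ℂ → ℂ := fun l => ((s / c : ℝ) : ℂ) * L (F (l • w')) with hg_def
  have hφmaps : Set.MapsTo (fun l : ℂ => l • w') (ball (0:ℂ) 1) D := by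
    intro l hl
    exact hbal w' hτD l (mem_ball_zero_iff.1 hl).le
  have hgmaps : Set.MapsTo g (ball (0:ℂ) 1) (ball (0:ℂ) 1) := by
    intro l hl
    rw [mem_ball_zero_iff, hg_def]
    have h1 : F (l • w') ∈ D := hFmaps (hφmaps hl)
    have h2 : ‖L (F (l • w'))‖ < c / s := hLbound _ h1
    simp only [norm_mul, Complex.norm_real, Real.norm_eq_abs,
      abs_of_pos (div_pos hs0 hc0)]
    calc s / c * ‖L (F (l • w'))‖ < s / c * (c / s) :=
          mul_lt_mul_of_pos_left h2 (div_pos hs0 hc0)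
      _ = 1 := by field_simp
  have hgd : DifferentiableOn ℂ g (ball (0:ℂ) 1) := by
    have hφd : DifferentiableOn ℂ (fun l : ℂ => l • w') (ball (0:ℂ) 1) :=
      (differentiable_id.smul_const w').differentiableOn
    have h2 : DifferentiableOn ℂ (fun l : ℂ => F (l • w')) (ball (0:ℂ) 1) :=
      hF.comp hφd hφmaps
    have h3 : DifferentiableOn ℂ (fun l : ℂ => L (F (l • w'))) (ball (0:ℂ) 1) :=
      L.differentiable.comp_differentiableOn h2
    exact h3.const_mul _
  have hg0 : ‖g 0‖ ≤ a := by
    rw [hg_def]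
    simp only [zero_smul, norm_mul, Complex.norm_real, Real.norm_eq_abs,
      abs_of_pos (div_pos hs0 hc0)]
    exact hLF0
  have hφt : ((t : ℝ) : ℂ) • w' = r • w := by
    rw [hw'_def, ← coe_smul τ w, smul_smul, ← Complex.ofReal_mul, coe_smul,
      ht_def, div_mul_cancel₀ _ hτ0.ne']
  have hgt_re : (g ((t : ℝ) : ℂ)).re = s := by
    rw [hg_def]
    simp only [hφt]
    simp only [Complex.mul_re, Complex.ofReal_re, Complex.ofReal_im, zero_mul, sub_zero, hLre]
    rw [← hc_def]
    field_simp
  have htball : ((t : ℝ) : ℂ) ∈ ball (0:ℂ) 1 := by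
    rw [mem_ball_zero_iff, Complex.norm_real, Real.norm_eq_abs, abs_of_pos ht0]
    exact ht1
  have hSP := schwarz_pick hgd hgmaps htball
  have hnt : ‖((t : ℝ) : ℂ)‖ = t := by
    rw [Complex.norm_real, Real.norm_eq_abs, abs_of_pos ht0]
  rw [hnt] at hSP
  have hsle : s ≤ ‖g ((t : ℝ) : ℂ)‖ := by
    calc s = (g ((t : ℝ) : ℂ)).re := hgt_re.symm
      _ ≤ ‖g ((t : ℝ) : ℂ)‖ := Complex.re_le_norm _
      _ = ‖g ((t : ℝ) : ℂ)‖ := rfl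
  set A := ‖g ((t : ℝ) : ℂ)‖
  set b0 := ‖g 0‖
  have hb00 : 0 ≤ b0 := norm_nonneg _
  have hrr : r * (1 - s * a) = s - a := by
    rw [hr_def, div_mul_cancel₀ _ (by linarith : (1:ℝ) - s * a ≠ 0)]
  exact final_aux s a r t A b0 ha0 hs1 hs2 ht0 ht1 htr hrr hb00 hg0 hsle hSP
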